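/- arXiv:1504.06700 — 4 statements merged into one kernel-verified Lean document; each statement's English description precedes it below -/
import Mathlib

section
/- Weak duality: for an inconsistent PMCS, the union of all minimal c-inconsistency explanations equals the union of all c-diagnoses, i.e., ⋃ E⁺_c((M,≤s)) = ⋃ D⁻_c((M,≤s)). -/
/-- `D` is an s-diagnosis of the system with bridge rules `br`. -/
def SDiag {α : Type*} [DecidableEq α] (br : Finset α) (Bot : Finset α → Prop)
    (D : Finset α) : Prop :=
  D ⊆ br ∧ ¬ Bot (br \ D)

/-- `D` is a c-diagnosis: a ⊆-minimal s-diagnosis disjoint from `K`. -/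
def CDiag {α : Type*} [DecidableEq α] (br K : Finset α) (Bot : Finset α → Prop)
    (D : Finset α) : Prop :=
  SDiag br Bot D ∧ (∀ D', D' ⊆ D → SDiag br Bot D' → D' = D) ∧ D ∩ K = ∅

/-- `E` is a c-inconsistency explanation relative to the maximal consistent section `K`. -/
def CExpl {α : Type*} [DecidableEq α] (br K : Finset α) (Bot : Finset α → Prop)
    (E : Finset α) : Prop :=
  E ⊆ br \ K ∧ ∀ R, E ⊆ R → R ⊆ br \ K → Bot (K ∪ R)

lemma exists_min {α : Type*} [DecidableEq α] (P : Finset α → Prop) :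
    ∀ S : Finset α, P S → ∃ T, T ⊆ S ∧ P T ∧ ∀ T', T' ⊆ T → P T' → T' = T := by
  intro S
  induction S using Finset.strongInductionOn with
  | _ S ih =>
    intro hS
    by_cases h : ∃ T, T ⊂ S ∧ P T
    · obtain ⟨T, hT, hPT⟩ := h
      obtain ⟨U, hUT, hPU, hmin⟩ := ih T hT hPT
      exact ⟨U, hUT.trans hT.subset, hPU, hmin⟩
    · refine ⟨S, Finset.Subset.refl S, hS, fun T' h1 h2 => ?_⟩
      by_contra hne
      exact h ⟨T', Finset.ssubset_iff_subset_ne.mpr ⟨h1, hne⟩, h2⟩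

lemma comp_lemma {α : Type*} [DecidableEq α] {br K R : Finset α}
    (hK : K ⊆ br) (hR : R ⊆ br \ K) : br \ ((br \ K) \ R) = K ∪ R := by
  ext a
  have h1 : a ∈ K → a ∈ br := fun h => hK h
  have h2 : a ∈ R → a ∈ br ∧ a ∉ K := fun h => Finset.mem_sdiff.mp (hR h)
  simp only [Finset.mem_sdiff, Finset.mem_union]
  tauto

/-- weak duality: for an inconsistent PMCS, the union of all minimal
c-inconsistency explanations equals the union of all c-diagnoses:
⋃ E⁺_c((M,≤s)) = ⋃ D⁻_c((M,≤s)). -/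
theorem weak_duality {α : Type*} [DecidableEq α]
    (br K : Finset α) (Bot : Finset α → Prop)
    (hK : K ⊆ br) (hKcons : ¬ Bot K) (hbr : Bot br) :
    {x : α | ∃ E, CExpl br K Bot E ∧ (∀ E', E' ⊆ E → CExpl br K Bot E' → E' = E) ∧ x ∈ E}
      = {x : α | ∃ D, CDiag br K Bot D ∧ x ∈ D} := by
  set N : Finset α := br \ K with hN
  have hNbr : N ⊆ br := Finset.sdiff_subset
  -- key translation: for D ⊆ N, Bot (br \ D) ↔ Bot (K ∪ (N \ D))
  have key : ∀ D : Finset α, D ⊆ N → br \ D = K ∪ (N \ D) := by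
    intro D hD
    have := comp_lemma hK (Finset.sdiff_subset : N \ D ⊆ N)
    rw [Finset.sdiff_sdiff_eq_self hD] at this
    exact this
  ext x
  simp only [Set.mem_setOf_eq]
  constructor
  · rintro ⟨E, hE, hEmin, hxE⟩
    have hEN : E ⊆ N := hE.1
    -- E \ {x} is not an explanation
    have hnot : ¬ CExpl br K Bot (E \ {x}) := by
      intro hC
      have heq := hEmin (E \ {x}) Finset.sdiff_subset hC
      rw [← heq] at hxE
      simp at hxE
    -- so there is R with E \ {x} ⊆ R ⊆ N and ¬ Bot (K ∪ R)
    have hsub : E \ {x} ⊆ N := Finset.sdiff_subset.trans hEN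
    have : ∃ R, (E \ {x}) ⊆ R ∧ R ⊆ N ∧ ¬ Bot (K ∪ R) := by
      by_contra h
      push_neg at h
      exact hnot ⟨hsub, fun R h1 h2 => h R h1 h2⟩
    obtain ⟨R, hR1, hR2, hR3⟩ := this
    set D : Finset α := N \ R with hD
    have hDN : D ⊆ N := Finset.sdiff_subset
    have hSD : SDiag br Bot D := by
      refine ⟨hDN.trans hNbr, ?_⟩
      rw [comp_lemma hK hR2]
      exact hR3
    -- property: any s-diagnosis D' ⊆ N disjoint from E is impossible
    have hits : ∀ D', D' ⊆ N → SDiag br Bot D' → (D' ∩ E).Nonempty := by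
      intro D' hD'N hSD'
      rcases Finset.eq_empty_or_nonempty (D' ∩ E) with hemp | hne
      · exfalso
        have hEsub : E ⊆ N \ D' := by
          intro a ha
          refine Finset.mem_sdiff.mpr ⟨hEN ha, fun haD => ?_⟩
          have : a ∈ D' ∩ E := Finset.mem_inter.mpr ⟨haD, ha⟩
          simp [hemp] at this
        have := hE.2 (N \ D') hEsub Finset.sdiff_subset
        rw [← key D' hD'N] at this
        exact hSD'.2 this
      · exact hne
    -- D ∩ E ⊆ {x}
    have hDEx : D ∩ E ⊆ {x} := by
      intro a ha
      obtain ⟨haD, haE⟩ := Finset.mem_inter.mp ha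
      by_contra hax
      simp only [Finset.mem_singleton] at hax
      have : a ∈ R := hR1 (Finset.mem_sdiff.mpr ⟨haE, by simpa using hax⟩)
      exact (Finset.mem_sdiff.mp haD).2 this
    obtain ⟨D', hD'D, hSD', hmin⟩ := exists_min (SDiag br Bot) D hSD
    have hD'N : D' ⊆ N := hD'D.trans hDN
    refine ⟨D', ⟨hSD', hmin, ?_⟩, ?_⟩
    · apply Finset.eq_empty_of_forall_notMem
      intro a ha
      obtain ⟨h1, h2⟩ := Finset.mem_inter.mp ha
      exact (Finset.mem_sdiff.mp (hD'N h1)).2 h2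
    · obtain ⟨a, ha⟩ := hits D' hD'N hSD'
      have hax : a ∈ ({x} : Finset α) :=
        hDEx (Finset.mem_inter.mpr ⟨hD'D (Finset.mem_inter.mp ha).1, (Finset.mem_inter.mp ha).2⟩)
      simp only [Finset.mem_singleton] at hax
      exact hax ▸ (Finset.mem_inter.mp ha).1
  · rintro ⟨D, ⟨hSD, hDmin, hDK⟩, hxD⟩
    have hDN : D ⊆ N := by
      intro a ha
      refine Finset.mem_sdiff.mpr ⟨hSD.1 ha, fun haK => ?_⟩
      have : a ∈ D ∩ K := Finset.mem_inter.mpr ⟨ha, haK⟩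
      simp [hDK] at this
    set E₀ : Finset α := insert x (N \ D) with hE₀
    have hE₀N : E₀ ⊆ N := by
      intro a ha
      rcases Finset.mem_insert.mp ha with h | h
      · exact h ▸ hDN hxD
      · exact Finset.sdiff_subset h
    have hCE₀ : CExpl br K Bot E₀ := by
      refine ⟨hE₀N, fun R h1 h2 => ?_⟩
      by_contra hbot
      set D'' : Finset α := N \ R with hD''
      have hD''N : D'' ⊆ N := Finset.sdiff_subset
      have hSD'' : SDiag br Bot D'' := by
        refine ⟨hD''N.trans hNbr, ?_⟩
        rw [comp_lemma hK h2]
        exact hbot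
      have hD''sub : D'' ⊆ D := by
        intro a ha
        obtain ⟨haN, haR⟩ := Finset.mem_sdiff.mp ha
        by_contra haD
        exact haR (h1 (Finset.mem_insert.mpr (Or.inr (Finset.mem_sdiff.mpr ⟨haN, haD⟩))))
      have heq := hDmin D'' hD''sub hSD''
      have hxD'' : x ∈ D'' := heq ▸ hxD
      exact (Finset.mem_sdiff.mp hxD'').2 (h1 (Finset.mem_insert_self x _))
    obtain ⟨E, hEE₀, hCE, hEmin⟩ := exists_min (CExpl br K Bot) E₀ hCE₀
    refine ⟨E, hCE, hEmin, ?_⟩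
    by_contra hxE
    have hEsub : E ⊆ N \ D := by
      intro a ha
      rcases Finset.mem_insert.mp (hEE₀ ha) with h | h
      · exact absurd (h ▸ ha) hxE
      · exact h
    have := hCE.2 (N \ D) hEsub Finset.sdiff_subset
    rw [← key D hDN] at this
    exact hSD.2 this
end

section
/- For any subset E of a finite set br with inconsistency predicate Bot, if E is a minimal s-inconsistency explanation (every R with E ⊆ R ⊆ br satisfies Bot(R), and no proper subset of E has this property), then for every x ∈ E there exists a minimal s-diagnosis D with x ∈ D; consequently ⋃ E⁺_m(M) ⊆ ⋃ D⁻_m(M). -/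
/-- `E` is an s-inconsistency explanation. -/
def SExpl {α : Type*} [DecidableEq α] (br : Finset α) (Bot : Finset α → Prop)
    (E : Finset α) : Prop :=
  E ⊆ br ∧ ∀ R, E ⊆ R → R ⊆ br → Bot R

lemma exists_min_sdiag {α : Type*} [DecidableEq α] (br : Finset α) (Bot : Finset α → Prop) :
    ∀ D, SDiag br Bot D →
      ∃ D', D' ⊆ D ∧ SDiag br Bot D' ∧ ∀ D'', D'' ⊆ D' → SDiag br Bot D'' → D'' = D' := by
  intro D
  induction D using Finset.strongInduction with
  | _ D ih =>
    intro hD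
    by_cases h : ∀ D'', D'' ⊆ D → SDiag br Bot D'' → D'' = D
    · exact ⟨D, subset_rfl, hD, h⟩
    · push_neg at h
      obtain ⟨D'', hsub, hdiag, hne⟩ := h
      obtain ⟨D', h1, h2, h3⟩ := ih D'' (lt_of_le_of_ne hsub hne) hdiag
      exact ⟨D', h1.trans hsub, h2, h3⟩

/-- if `E` is a minimal s-inconsistency explanation then each `x ∈ E`
belongs to some minimal s-diagnosis; consequently ⋃ E⁺_m(M) ⊆ ⋃ D⁻_m(M). -/
theorem expl_union_subset_diag_union {α : Type*} [DecidableEq α]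
    (br : Finset α) (Bot : Finset α → Prop) (hbr : Bot br) (hemp : ¬ Bot ∅) :
    (∀ E, SExpl br Bot E → (∀ E', E' ⊆ E → SExpl br Bot E' → E' = E) →
      ∀ x ∈ E, ∃ D, SDiag br Bot D ∧ (∀ D', D' ⊆ D → SDiag br Bot D' → D' = D) ∧ x ∈ D) ∧
    {x : α | ∃ E, SExpl br Bot E ∧ (∀ E', E' ⊆ E → SExpl br Bot E' → E' = E) ∧ x ∈ E}
      ⊆ {x : α | ∃ D, SDiag br Bot D ∧ (∀ D', D' ⊆ D → SDiag br Bot D' → D' = D) ∧ x ∈ D} := by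
  have main : ∀ E, SExpl br Bot E → (∀ E', E' ⊆ E → SExpl br Bot E' → E' = E) →
      ∀ x ∈ E, ∃ D, SDiag br Bot D ∧ (∀ D', D' ⊆ D → SDiag br Bot D' → D' = D) ∧ x ∈ D := by
    intro E hE hmin x hx
    -- E \ {x} is not an explanation
    have hnot : ¬ SExpl br Bot (E \ {x}) := by
      intro h
      have heq := hmin _ (Finset.sdiff_subset) h
      rw [← heq] at hx
      simp at hx
    have hsub : E \ {x} ⊆ br := Finset.Subset.trans Finset.sdiff_subset hE.1
    -- so some R with E\{x} ⊆ R ⊆ br has ¬ Bot R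
    have : ∃ R, (E \ {x}) ⊆ R ∧ R ⊆ br ∧ ¬ Bot R := by
      by_contra h
      push_neg at h
      exact hnot ⟨hsub, fun R h1 h2 => h R h1 h2⟩
    obtain ⟨R, hRs, hRbr, hRnot⟩ := this
    -- x ∉ R, else E ⊆ R and Bot R
    have hxR : x ∉ R := by
      intro hxR
      apply hRnot
      apply hE.2 R _ hRbr
      intro y hy
      by_cases hxy : y = x
      · exact hxy ▸ hxR
      · exact hRs (Finset.mem_sdiff.mpr ⟨hy, by simp [hxy]⟩)
    -- D₀ := br \ R is a diagnosis containing x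
    have hD0 : SDiag br Bot (br \ R) := by
      refine ⟨Finset.sdiff_subset, ?_⟩
      rwa [Finset.sdiff_sdiff_self_left, Finset.inter_eq_right.mpr hRbr]
    obtain ⟨D, hDsub, hDdiag, hDmin⟩ := exists_min_sdiag br Bot _ hD0
    refine ⟨D, hDdiag, hDmin, ?_⟩
    -- x ∈ D: else E ⊆ br \ D, Bot (br \ D), contradiction
    by_contra hxD
    apply hDdiag.2
    apply hE.2 _ _ Finset.sdiff_subset
    intro y hy
    by_cases hxy : y = x
    · subst hxy
      exact Finset.mem_sdiff.mpr ⟨hE.1 hy, hxD⟩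
    · have hyR : y ∈ R := hRs (Finset.mem_sdiff.mpr ⟨hy, by simp [hxy]⟩)
      have : y ∉ D := fun h => (Finset.mem_sdiff.mp (hDsub h)).2 hyR
      exact Finset.mem_sdiff.mpr ⟨hRbr hyR, this⟩
  refine ⟨main, ?_⟩
  rintro x ⟨E, hE, hEmin, hxE⟩
  exact main E hE hEmin x hxE
end

section
/- For any subset D of a finite set br with inconsistency predicate Bot, if D is a minimal s-diagnosis, then for every x ∈ D there exists a minimal s-inconsistency explanation E with x ∈ E; consequently ⋃ D⁻_m(M) ⊆ ⋃ E⁺_m(M). -/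
lemma exists_min_expl {α : Type*} [DecidableEq α] (br : Finset α) (Bot : Finset α → Prop) :
    ∀ E₀ : Finset α, SExpl br Bot E₀ →
      ∃ E, E ⊆ E₀ ∧ SExpl br Bot E ∧ ∀ E', E' ⊆ E → SExpl br Bot E' → E' = E := by
  intro E₀
  induction E₀ using Finset.strongInduction with
  | _ E₀ ih =>
    intro hE₀
    by_cases h : ∃ E', E' ⊂ E₀ ∧ SExpl br Bot E'
    · obtain ⟨E', hlt, hE'⟩ := h
      obtain ⟨E, hsub, hexp, hmin⟩ := ih E' hlt hE'
      exact ⟨E, hsub.trans hlt.subset, hexp, hmin⟩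
    · refine ⟨E₀, subset_rfl, hE₀, fun E' hsub hE' => ?_⟩
      by_contra hne
      exact h ⟨E', ⟨hsub, fun hsub' => hne (subset_antisymm hsub hsub')⟩, hE'⟩

/-- if `D` is a minimal s-diagnosis then each `x ∈ D` belongs to some
minimal s-inconsistency explanation; consequently ⋃ D⁻_m(M) ⊆ ⋃ E⁺_m(M). -/
theorem diag_union_subset_expl_union {α : Type*} [DecidableEq α]
    (br : Finset α) (Bot : Finset α → Prop) (hbr : Bot br) (hemp : ¬ Bot ∅) :
    (∀ D, SDiag br Bot D → (∀ D', D' ⊆ D → SDiag br Bot D' → D' = D) →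
      ∀ x ∈ D, ∃ E, SExpl br Bot E ∧ (∀ E', E' ⊆ E → SExpl br Bot E' → E' = E) ∧ x ∈ E) ∧
    {x : α | ∃ D, SDiag br Bot D ∧ (∀ D', D' ⊆ D → SDiag br Bot D' → D' = D) ∧ x ∈ D}
      ⊆ {x : α | ∃ E, SExpl br Bot E ∧ (∀ E', E' ⊆ E → SExpl br Bot E' → E' = E) ∧ x ∈ E} := by
  have main : ∀ D, SDiag br Bot D → (∀ D', D' ⊆ D → SDiag br Bot D' → D' = D) →
      ∀ x ∈ D, ∃ E, SExpl br Bot E ∧ (∀ E', E' ⊆ E → SExpl br Bot E' → E' = E) ∧ x ∈ E := by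
    intro D hD hDmin x hx
    -- E₀ = br \ (D \ {x}) is an explanation
    have hE₀ : SExpl br Bot (br \ (D \ {x})) := by
      refine ⟨Finset.sdiff_subset, fun R hER hRbr => ?_⟩
      by_contra hBotR
      -- T := br \ R is a diagnosis contained in D \ {x}
      have hT : br \ (br \ R) = R := Finset.sdiff_sdiff_eq_self hRbr
      have hTdiag : SDiag br Bot (br \ R) := ⟨Finset.sdiff_subset, by rw [hT]; exact hBotR⟩
      have hTsub : br \ R ⊆ D \ {x} := by
        intro y hy
        rw [Finset.mem_sdiff] at hy
        by_contra hyn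
        exact hy.2 (hER (Finset.mem_sdiff.mpr ⟨hy.1, hyn⟩))
      have := hDmin (br \ R) (hTsub.trans (Finset.sdiff_subset)) hTdiag
      have hxT : x ∈ br \ R := this ▸ hx
      exact (Finset.mem_sdiff.mp (hTsub hxT)).2 (Finset.mem_singleton_self x)
    obtain ⟨E, hsub, hexp, hmin⟩ := exists_min_expl br Bot _ hE₀
    refine ⟨E, hexp, hmin, ?_⟩
    by_contra hxE
    -- then E ⊆ br \ D, which is consistent, contradiction
    have hEsub : E ⊆ br \ D := by
      intro y hy
      have := hsub hy
      rw [Finset.mem_sdiff] at this ⊢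
      refine ⟨this.1, fun hyD => ?_⟩
      have : y ∉ D \ {x} := this.2
      rw [Finset.mem_sdiff, Finset.mem_singleton] at this
      have hyx : y = x := by tauto
      exact hxE (hyx ▸ hy)
    exact hD.2 (hexp.2 (br \ D) hEsub Finset.sdiff_subset)
  refine ⟨main, fun x hx => ?_⟩
  obtain ⟨D, hD, hDmin, hxD⟩ := hx
  exact main D hD hDmin x hxD
end

section
/- Suppose Bot : Finset br → Prop satisfies Bot(br), and K ⊆ br with ¬Bot(K). If D is a c-diagnosis (minimal s-diagnosis disjoint from K) and x ∈ D, then letting Ẽ = br \ (D \ {x}), we have K ⊆ Ẽ and Bot(R ∪ K) for every R with Ẽ \ K ⊆ R ⊆ br \ K; hence E := Ẽ \ K is a c-inconsistency explanation containing x. -/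
/-- key construction in the proof of ⋃ D⁻_c ⊆ ⋃ E⁺_c.  If `D` is a
c-diagnosis (a ⊆-minimal s-diagnosis disjoint from the bridge rules `K` of the maximal
consistent section) and `x ∈ D`, then with Ẽ = br \ (D \ {x}) we have K ⊆ Ẽ,
every `R` with Ẽ \ K ⊆ R ⊆ br \ K satisfies `Bot (K ∪ R)`, and `E := Ẽ \ K` is a
c-inconsistency explanation containing `x`. -/
theorem c_diag_to_c_expl {α : Type*} [DecidableEq α]
    (br K D : Finset α) (Bot : Finset α → Prop)
    (hbr : Bot br) (hK : K ⊆ br) (hKcons : ¬ Bot K)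
    (hD : D ⊆ br ∧ ¬ Bot (br \ D))
    (hDmin : ∀ D', D' ⊆ D → (D' ⊆ br ∧ ¬ Bot (br \ D')) → D' = D)
    (hDK : D ∩ K = ∅) (x : α) (hx : x ∈ D) :
    K ⊆ br \ (D \ {x}) ∧
    (∀ R, (br \ (D \ {x})) \ K ⊆ R → R ⊆ br \ K → Bot (K ∪ R)) ∧
    ((br \ (D \ {x})) \ K ⊆ br \ K ∧
      ∀ R, (br \ (D \ {x})) \ K ⊆ R → R ⊆ br \ K → Bot (K ∪ R)) ∧
    x ∈ (br \ (D \ {x})) \ K := by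
  have hdisj : ∀ a, a ∈ D → a ∉ K := by
    intro a ha haK
    have : a ∈ D ∩ K := Finset.mem_inter.mpr ⟨ha, haK⟩
    simp [hDK] at this
  have hKE : K ⊆ br \ (D \ {x}) := by
    intro a ha
    refine Finset.mem_sdiff.mpr ⟨hK ha, ?_⟩
    intro h
    exact hdisj a (Finset.mem_sdiff.mp h).1 ha
  have key : ∀ R, (br \ (D \ {x})) \ K ⊆ R → R ⊆ br \ K → Bot (K ∪ R) := by
    intro R hER hRbr
    by_contra hnot
    set D' := br \ (K ∪ R) with hD'
    have hKRbr : K ∪ R ⊆ br := by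
      intro a ha
      rcases Finset.mem_union.mp ha with h | h
      · exact hK h
      · exact (Finset.mem_sdiff.mp (hRbr h)).1
    have hEKR : br \ (D \ {x}) ⊆ K ∪ R := by
      intro a ha
      by_cases haK : a ∈ K
      · exact Finset.mem_union_left _ haK
      · exact Finset.mem_union_right _ (hER (Finset.mem_sdiff.mpr ⟨ha, haK⟩))
    have hD'sub : D' ⊆ D := by
      intro a ha
      rcases Finset.mem_sdiff.mp ha with ⟨habr, haKR⟩
      by_contra haD
      exact haKR (hEKR (Finset.mem_sdiff.mpr ⟨habr, fun h => haD (Finset.mem_sdiff.mp h).1⟩))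
    have hbrD' : br \ D' = K ∪ R := by
      rw [hD', Finset.sdiff_sdiff_eq_self hKRbr]
    have := hDmin D' hD'sub ⟨Finset.sdiff_subset, by rw [hbrD']; exact hnot⟩
    have hxD' : x ∈ D' := this ▸ hx
    rcases Finset.mem_sdiff.mp hxD' with ⟨hxbr, hxKR⟩
    exact hxKR (hEKR (Finset.mem_sdiff.mpr ⟨hxbr, by simp⟩))
  have hxE : x ∈ (br \ (D \ {x})) \ K := by
    refine Finset.mem_sdiff.mpr ⟨Finset.mem_sdiff.mpr ⟨hD.1 hx, by simp⟩, hdisj x hx⟩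
  exact ⟨hKE, key, ⟨fun a ha => by
    rcases Finset.mem_sdiff.mp ha with ⟨h1, h2⟩
    exact Finset.mem_sdiff.mpr ⟨(Finset.mem_sdiff.mp h1).1, h2⟩, key⟩, hxE⟩
end
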